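/- Let p > 2, λ > 0 and let (a_n), (b_n), (c_n) be sequences of nonnegative reals (representing ‖u_n − u‖_p^p, ‖u_n' − u'‖_2^2, ‖u_n − u‖_2^2 respectively) with c_n > 0, and suppose by Brezis–Lieb splitting that a_n = A_n − A + o(1), b_n = B_n − B + o(1), c_n = C_n − C + o(1), where A_n − B_n = λ C_n for all n (Nehari condition for u_n), A − B = ℓ·C with ℓ < λ and C > 0, and C_n → μ. If the quantity (a_n − b_n)/c_n is bounded above, then necessarily μ > C, and lim_n (a_n − b_n)/c_n = λ + (C/(μ − C))·(λ − ℓ). -/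

import Mathlib

open Filter

/-- Algebraic core of the Brezis–Lieb splitting argument: with
`a_n = A_n - A + o(1)`, `b_n = B_n - B + o(1)`, `c_n = C_n - C + o(1)`,
`A_n - B_n = λ C_n`, `A - B = ℓ C` with `ℓ < λ`, `C > 0`, `C_n → μ`, and
`(a_n - b_n)/c_n` bounded above, one gets `μ > C` and
`(a_n - b_n)/c_n → λ + (C/(μ - C))(λ - ℓ)`. -/
theorem brezis_lieb_quotient_limit
    (p lam l mu A B C : ℝ) (hp : 2 < p) (hlam : 0 < lam)
    (a b c A' B' C' : ℕ → ℝ)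
    (ha0 : ∀ n, 0 ≤ a n) (hb0 : ∀ n, 0 ≤ b n) (hc0 : ∀ n, 0 < c n)
    (hBLa : Tendsto (fun n => a n - (A' n - A)) atTop (nhds 0))
    (hBLb : Tendsto (fun n => b n - (B' n - B)) atTop (nhds 0))
    (hBLc : Tendsto (fun n => c n - (C' n - C)) atTop (nhds 0))
    (hNeh : ∀ n, A' n - B' n = lam * C' n)
    (hABC : A - B = l * C) (hl : l < lam) (hCpos : 0 < C)
    (hCn : Tendsto C' atTop (nhds mu))
    (hbdd : ∃ M : ℝ, ∀ n, (a n - b n) / c n ≤ M) :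
    C < mu ∧
      Tendsto (fun n => (a n - b n) / c n) atTop
        (nhds (lam + (C / (mu - C)) * (lam - l))) := by
  -- numerator limit
  have h1 : Tendsto (fun n => a n - b n) atTop (nhds (lam * mu - l * C)) := by
    have h := ((hBLa.sub hBLb).add ((hCn.const_mul lam).sub_const (l * C)))
    simp only [sub_zero, zero_add, zero_sub, add_zero] at h
    convert h using 2 with n
    have := hNeh n
    ring_nf
    nlinarith [hNeh n, hABC]
  -- denominator limit
  have h2 : Tendsto c atTop (nhds (mu - C)) := by
    have h := hBLc.add (hCn.sub_const C)
    simp only [zero_add] at h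
    convert h using 2 with n
    ring
  have hle : C ≤ mu := by
    have : (0:ℝ) ≤ mu - C := le_of_tendsto_of_tendsto' tendsto_const_nhds h2
      (fun n => (hc0 n).le)
    linarith
  obtain ⟨M, hM⟩ := hbdd
  have hne : C ≠ mu := by
    intro hEq
    subst hEq
    simp only [sub_self] at h2
    have hnum : (0:ℝ) < lam * C - l * C := by nlinarith
    have h2' : Tendsto c atTop (nhdsWithin 0 (Set.Ioi 0)) :=
      tendsto_nhdsWithin_of_tendsto_nhds_of_eventually_within _ h2
        (Eventually.of_forall fun n => hc0 n)
    have hinv : Tendsto (fun n => (c n)⁻¹) atTop atTop :=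
      tendsto_inv_nhdsGT_zero.comp h2'
    have htop : Tendsto (fun n => (a n - b n) / c n) atTop atTop := by
      simpa [div_eq_mul_inv] using h1.pos_mul_atTop hnum hinv
    obtain ⟨n, hn⟩ := (htop.eventually_gt_atTop M).exists
    exact absurd (hM n) (not_le.mpr hn)
  have hlt : C < mu := lt_of_le_of_ne hle hne
  refine ⟨hlt, ?_⟩
  have hden : mu - C ≠ 0 := by linarith
  have := h1.div h2 hden
  convert this using 2
  · rfl
  · rw [eq_div_iff hden]
    have hcan : C / (mu - C) * (mu - C) = C := div_mul_cancel₀ C hden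
    linear_combination (lam - l) * hcan
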